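/- Let X ⊆ ℝⁿ be a nonempty compact set, K and m positive integers, a(x) = Âx + â ∈ ℝ^m an affine map, and for each k ∈ [K] let b_k(x) = B̂_kᵀ x + b̂_k ∈ ℝ be affine; let ξ⁰ ∈ ℝ^m and θ ≥ 0. Then min_{x∈X} min_{ξ : ‖ξ−ξ⁰‖₁ ≤ θ} max_{k∈[K]} ( ξᵀ a(x) + b_k(x) ) = min_{i∈[m]} min{ min_{x∈X} max_{k∈[K]} ( b_k(x) + (ξ⁰)ᵀ a(x) − θ a_i(x) ), min_{x∈X} max_{k∈[K]} ( b_k(x) + (ξ⁰)ᵀ a(x) + θ a_i(x) ) }, where a_i(x) denotes the i-th coordinate of a(x); in particular, when the affine maps a_k all coincide and p = 1, the sDFO problem with convex piecewise affine recourse is solved by 2m convex programs, and all minima are attained. -/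
import Mathlib


/-- sDFO with convex piecewise affine recourse `Q(x, ξ) = max_k (ξᵀ a(x) + b_k(x))`
(all pieces sharing the same affine map `a`) and `ℓ₁`-ball uncertainty set
`{ξ : ‖ξ − ξ⁰‖₁ ≤ θ}`: the optimal value is the smallest of the optimal values of the
`2m` convex programs `min_{x∈X} max_k (b_k(x) + (ξ⁰)ᵀ a(x) ∓ θ a_i(x))`, and all
minima are attained. -/
theorem sdfo_convex_common_a_l1 {n m K : ℕ} (hm : 0 < m) (hK : 0 < K)
    (X : Set (Fin n → ℝ)) (hne : X.Nonempty) (hcomp : IsCompact X)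
    (A : Matrix (Fin m) (Fin n) ℝ) (ahat : Fin m → ℝ)
    (B : Fin K → Fin n → ℝ) (bhat : Fin K → ℝ)
    (ξ0 : Fin m → ℝ) (θ : ℝ) (hθ : 0 ≤ θ) :
    let a : (Fin n → ℝ) → Fin m → ℝ := fun x j => (∑ i, A j i * x i) + ahat j
    let b : Fin K → (Fin n → ℝ) → ℝ := fun k x => (∑ i, B k i * x i) + bhat k
    ∃ v : ℝ,
      IsLeast {r : ℝ | ∃ x ∈ X, ∃ ξ : Fin m → ℝ, (∑ j, |ξ j - ξ0 j|) ≤ θ ∧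
        r = ⨆ k : Fin K, ((∑ j, ξ j * a x j) + b k x)} v ∧
      IsLeast {r : ℝ | ∃ i : Fin m, ∃ x ∈ X,
        r = (⨆ k : Fin K, (b k x + (∑ j, ξ0 j * a x j) - θ * a x i)) ∨
        r = (⨆ k : Fin K, (b k x + (∑ j, ξ0 j * a x j) + θ * a x i))} v := by
  intro a b
  have hKne : Nonempty (Fin K) := Fin.pos_iff_nonempty.mp hK
  have hmne : Nonempty (Fin m) := Fin.pos_iff_nonempty.mp hm
  -- `G x = max_k b_k(x)`, `N x = ‖a(x)‖_∞`
  set G : (Fin n → ℝ) → ℝ := fun x => Finset.univ.sup' Finset.univ_nonempty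
    (fun k : Fin K => b k x) with hG
  set N : (Fin n → ℝ) → ℝ := fun x => Finset.univ.sup' Finset.univ_nonempty
    (fun i : Fin m => |a x i|) with hNdef
  -- splitting the sup of `c + b_k x`
  have hsplit : ∀ (x : Fin n → ℝ) (c : ℝ), (⨆ k : Fin K, (c + b k x)) = c + G x := by
    intro x c
    rw [← Finset.sup'_univ_eq_ciSup]
    exact (Finset.add_sup' _ _ _ _).symm
  have hsplit' : ∀ (x : Fin n → ℝ) (c : ℝ), (⨆ k : Fin K, (b k x + c)) = G x + c := by
    intro x c
    rw [← Finset.sup'_univ_eq_ciSup]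
    exact (Finset.sup'_add _ _ _ _).symm
  -- continuity of all ingredients
  have hconta : ∀ j : Fin m, Continuous fun x : Fin n → ℝ => a x j := by
    intro j
    exact (continuous_finset_sum _ fun i _ =>
      (continuous_const.mul (continuous_apply i))).add continuous_const
  have hcontb : ∀ k : Fin K, Continuous (b k) := by
    intro k
    exact (continuous_finset_sum _ fun i _ =>
      (continuous_const.mul (continuous_apply i))).add continuous_const
  have hcontG : Continuous G := by
    exact Continuous.finset_sup'_apply _ fun k _ => hcontb k
  have hcontN : Continuous N := by
    exact Continuous.finset_sup'_apply _ fun i _ => (hconta i).abs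
  have hcontsum : Continuous fun x : Fin n → ℝ => ∑ j, ξ0 j * a x j :=
    continuous_finset_sum _ fun j _ => continuous_const.mul (hconta j)
  set h : (Fin n → ℝ) → ℝ := fun x => (∑ j, ξ0 j * a x j) + G x - θ * N x with hh
  have hconth : Continuous h := (hcontsum.add hcontG).sub (continuous_const.mul hcontN)
  obtain ⟨x₀, hx₀X, hx₀min⟩ := hcomp.exists_isMinOn hne hconth.continuousOn
  have hmin : ∀ x ∈ X, h x₀ ≤ h x := fun x hx => hx₀min hx
  -- basic facts about N
  have hNa : ∀ (x : Fin n → ℝ) (i : Fin m), |a x i| ≤ N x := by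
    intro x i
    exact Finset.le_sup' (fun i : Fin m => |a x i|) (Finset.mem_univ i)
  have hN0 : ∀ x : Fin n → ℝ, 0 ≤ N x := fun x =>
    le_trans (abs_nonneg _) (hNa x (Classical.arbitrary _))
  -- the lower bound `h x ≤` both objective forms
  refine ⟨h x₀, ⟨?_, ?_⟩, ⟨?_, ?_⟩⟩
  · -- membership in the first set
    obtain ⟨i₀, -, hi₀⟩ :=
      Finset.exists_mem_eq_sup' (Finset.univ_nonempty) (fun i : Fin m => |a x₀ i|)
    set s : ℝ := if 0 ≤ a x₀ i₀ then 1 else -1 with hs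
    have hNx : N x₀ = |a x₀ i₀| := hi₀
    have habs_s : |s| = 1 := by
      by_cases hc : 0 ≤ a x₀ i₀
      · simp [hs, hc]
      · simp [hs, hc]
    have hsabs : |(-θ) * s| = θ := by
      rw [abs_mul, habs_s, mul_one, abs_neg, abs_of_nonneg hθ]
    have hsa : s * a x₀ i₀ = |a x₀ i₀| := by
      by_cases hc : 0 ≤ a x₀ i₀
      · rw [hs, if_pos hc, one_mul, abs_of_nonneg hc]
      · rw [hs, if_neg hc, abs_of_neg (not_le.mp hc)]; ring
    refine ⟨x₀, hx₀X, fun j => ξ0 j + (if j = i₀ then (-θ) * s else 0), ?_, ?_⟩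
    · have : ∀ j : Fin m, |ξ0 j + (if j = i₀ then (-θ) * s else 0) - ξ0 j|
          = if j = i₀ then θ else 0 := by
        intro j
        by_cases hj : j = i₀
        · rw [if_pos hj, if_pos hj,
            show ξ0 j + (-θ) * s - ξ0 j = (-θ) * s by ring, hsabs]
        · rw [if_neg hj, if_neg hj]; simp
      rw [Finset.sum_congr rfl fun j _ => this j, Finset.sum_ite_eq' _ i₀]
      simp
    · have hsum : (∑ j, (ξ0 j + (if j = i₀ then (-θ) * s else 0)) * a x₀ j)
          = (∑ j, ξ0 j * a x₀ j) - θ * N x₀ := by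
        rw [Finset.sum_congr rfl (fun j _ => add_mul _ _ _), Finset.sum_add_distrib]
        congr 1
        have : ∀ j : Fin m, (if j = i₀ then (-θ) * s else 0) * a x₀ j
            = if j = i₀ then (-θ) * s * a x₀ i₀ else 0 := by
          intro j; by_cases hj : j = i₀ <;> simp [hj]
        rw [Finset.sum_congr rfl fun j _ => this j, Finset.sum_ite_eq' _ i₀]
        simp only [Finset.mem_univ, if_true]
        rw [mul_assoc, hsa, ← hNx]
        ring
      rw [hsplit x₀ _, hsum, hh]
      ring
  · -- lower bound for the first set
    rintro r ⟨x, hxX, ξ, hξ, rfl⟩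
    rw [hsplit x _]
    have key : (∑ j, ξ0 j * a x j) - θ * N x ≤ ∑ j, ξ j * a x j := by
      have hdecomp : (∑ j, ξ j * a x j)
          = (∑ j, ξ0 j * a x j) + ∑ j, (ξ j - ξ0 j) * a x j := by
        rw [← Finset.sum_add_distrib]
        exact Finset.sum_congr rfl fun j _ => by ring
      have habs : |∑ j, (ξ j - ξ0 j) * a x j| ≤ θ * N x := by
        calc |∑ j, (ξ j - ξ0 j) * a x j| ≤ ∑ j, |(ξ j - ξ0 j) * a x j| :=
              Finset.abs_sum_le_sum_abs _ _
          _ ≤ ∑ j, |ξ j - ξ0 j| * N x := by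
              refine Finset.sum_le_sum fun j _ => ?_
              rw [abs_mul]
              exact mul_le_mul_of_nonneg_left (hNa x j) (abs_nonneg _)
          _ = (∑ j, |ξ j - ξ0 j|) * N x := by rw [← Finset.sum_mul]
          _ ≤ θ * N x := mul_le_mul_of_nonneg_right hξ (hN0 x)
      have := neg_le_of_abs_le habs
      rw [hdecomp]
      linarith
    have := hmin x hxX
    rw [hh] at this ⊢
    simp only at this ⊢
    linarith
  · -- membership in the second set
    obtain ⟨i₀, -, hi₀⟩ :=
      Finset.exists_mem_eq_sup' (Finset.univ_nonempty) (fun i : Fin m => |a x₀ i|)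
    have hNx : N x₀ = |a x₀ i₀| := hi₀
    refine ⟨i₀, x₀, hx₀X, ?_⟩
    rcases le_or_gt 0 (a x₀ i₀) with hc | hc
    · left
      have heq : (⨆ k : Fin K, (b k x₀ + (∑ j, ξ0 j * a x₀ j) - θ * a x₀ i₀))
          = ⨆ k : Fin K, (b k x₀ + ((∑ j, ξ0 j * a x₀ j) - θ * a x₀ i₀)) := by
        congr 1; funext k; ring
      rw [heq, hsplit' x₀ _]
      simp only [hh]
      rw [hNx, abs_of_nonneg hc]; ring
    · right
      have heq : (⨆ k : Fin K, (b k x₀ + (∑ j, ξ0 j * a x₀ j) + θ * a x₀ i₀))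
          = ⨆ k : Fin K, (b k x₀ + ((∑ j, ξ0 j * a x₀ j) + θ * a x₀ i₀)) := by
        congr 1; funext k; ring
      rw [heq, hsplit' x₀ _]
      simp only [hh]
      rw [hNx, abs_of_neg hc]; ring
  · -- lower bound for the second set
    rintro r ⟨i, x, hxX, hr | hr⟩
    · have heq : r = G x + ((∑ j, ξ0 j * a x j) - θ * a x i) := by
        rw [hr]
        rw [show (⨆ k : Fin K, (b k x + (∑ j, ξ0 j * a x j) - θ * a x i))
            = ⨆ k : Fin K, (b k x + ((∑ j, ξ0 j * a x j) - θ * a x i)) by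
          congr 1; funext k; ring, hsplit' x _]
      have h1 : θ * a x i ≤ θ * N x :=
        mul_le_mul_of_nonneg_left (le_trans (le_abs_self _) (hNa x i)) hθ
      have := hmin x hxX
      rw [hh] at this ⊢
      simp only at this ⊢
      rw [heq]
      linarith
    · have heq : r = G x + ((∑ j, ξ0 j * a x j) + θ * a x i) := by
        rw [hr]
        rw [show (⨆ k : Fin K, (b k x + (∑ j, ξ0 j * a x j) + θ * a x i))
            = ⨆ k : Fin K, (b k x + ((∑ j, ξ0 j * a x j) + θ * a x i)) by
          congr 1; funext k; ring, hsplit' x _]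
      have h1 : -(θ * N x) ≤ θ * a x i := by
        nlinarith [hNa x i, neg_abs_le (a x i), hN0 x,
          mul_le_mul_of_nonneg_left (hNa x i) hθ,
          mul_le_mul_of_nonneg_left (neg_abs_le (a x i)) hθ]
      have := hmin x hxX
      rw [hh] at this ⊢
      simp only at this ⊢
      rw [heq]
      linarith
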